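/- Let G be a finite group, W a finite-dimensional complex vector space carrying a representation of G, and h a G-invariant Hermitian inner product on W (positive definite, ℂ-linear in the first variable and conjugate-linear in the second). If W admits a G-invariant real structure, then there exists a G-invariant real structure R on W such that h(Rx, Ry) = h(y, x) for all x, y ∈ W. -/

import Mathlib

/-- A real structure on a complex vector space: a conjugate-linear involution. -/
def IsRealStructure {W : Type*} [AddCommGroup W] [Module ℂ W] (R : W → W) : Prop :=
  (∀ x y : W, R (x + y) = R x + R y) ∧
  (∀ (a : ℂ) (x : W), R (a • x) = (starRingEnd ℂ a) • R x) ∧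
  (∀ x : W, R (R x) = x)

/-- Let `W` be a finite-dimensional complex representation of a finite group
`G` and `h` a `G`-invariant Hermitian inner product on `W` (ℂ-linear in the first variable,
conjugate-linear in the second, positive definite).  If `W` admits a `G`-invariant real structure
then it admits one, `R`, satisfying moreover `h(Rx, Ry) = h(y, x)` for all `x, y`. -/
theorem exists_invariant_real_structure_compatible_with_hermitian
    {G : Type*} [Group G] [Finite G]
    {W : Type*} [AddCommGroup W] [Module ℂ W] [FiniteDimensional ℂ W]
    (ρ : Representation ℂ G W)
    (h : W → W → ℂ)
    (hadd₁ : ∀ x y z : W, h (x + y) z = h x z + h y z)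
    (hsmul₁ : ∀ (a : ℂ) (x y : W), h (a • x) y = a * h x y)
    (hadd₂ : ∀ x y z : W, h x (y + z) = h x y + h x z)
    (hsmul₂ : ∀ (a : ℂ) (x y : W), h x (a • y) = (starRingEnd ℂ a) * h x y)
    (hherm : ∀ x y : W, h y x = starRingEnd ℂ (h x y))
    (hposdef : ∀ x : W, x ≠ 0 → 0 < (h x x).re)
    (hinv : ∀ (s : G) (x y : W), h (ρ s x) (ρ s y) = h x y)
    (hreal : ∃ R₀ : W → W, IsRealStructure R₀ ∧ ∀ (s : G) (x : W), R₀ (ρ s x) = ρ s (R₀ x)) :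
    ∃ R : W → W, IsRealStructure R ∧ (∀ (s : G) (x : W), R (ρ s x) = ρ s (R x)) ∧
      ∀ x y : W, h (R x) (R y) = h y x := by
  classical
  obtain ⟨R₀, ⟨Radd, Rsmul, Rinvol⟩, Requiv⟩ := hreal
  -- basic facts about h and R₀
  have h0L : ∀ y : W, h 0 y = 0 := by
    intro y
    have := hsmul₁ 0 0 y
    simpa using this
  have hdefinite : ∀ x : W, h x x = 0 → x = 0 := by
    intro x hx
    by_contra hx0
    have := hposdef x hx0
    rw [hx] at this; simp at this
  have R0zero : R₀ 0 = 0 := by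
    have := Radd 0 0
    simpa using this.symm
  have R0inj : ∀ x : W, R₀ x = 0 → x = 0 := by
    intro x hx
    have : R₀ (R₀ x) = x := Rinvol x
    rw [hx, R0zero] at this; exact this.symm
  -- inner product space structure from h
  let c : InnerProductSpace.Core ℂ W :=
    { inner := fun x y => h y x
      conj_inner_symm := fun x y => (hherm x y).symm
      re_inner_nonneg := by
        intro x
        by_cases hx : x = 0
        · simp [hx, h0L]
        · exact le_of_lt (hposdef x hx)
      add_left := fun x y z => hadd₂ z x y
      smul_left := fun x y r => hsmul₂ r y x
      definite := fun x hx => hdefinite x hx }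
  letI : NormedAddCommGroup W := c.toNormedAddCommGroup
  letI : InnerProductSpace ℂ W := InnerProductSpace.ofCore c.toCore
  have hInner : ∀ x y : W, (inner ℂ x y : ℂ) = h y x := fun x y => rfl
  have hext : ∀ u v : W, (∀ y : W, h y u = h y v) → u = v := by
    intro u v H
    exact ext_inner_right ℂ fun y => H y
  -- bundle R₀
  let R₀ₗ : W →ₛₗ[starRingEnd ℂ] W :=
    { toFun := R₀, map_add' := Radd, map_smul' := Rsmul }
  -- the positive operator T
  let Tfun : W → W := fun x =>
    (InnerProductSpace.toDual ℂ W).symm (LinearMap.toContinuousLinearMap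
      { toFun := fun y => h (R₀ x) (R₀ y)
        map_add' := by
          intro y z
          show h (R₀ x) (R₀ (y + z)) = h (R₀ x) (R₀ y) + h (R₀ x) (R₀ z)
          rw [Radd, hadd₂]
        map_smul' := by
          intro a y
          show h (R₀ x) (R₀ (a • y)) = (RingHom.id ℂ) a • h (R₀ x) (R₀ y)
          rw [Rsmul, hsmul₂]
          simp })
  have hTdef : ∀ x y : W, h y (Tfun x) = h (R₀ x) (R₀ y) := by
    intro x y
    show (inner ℂ (Tfun x) y : ℂ) = h (R₀ x) (R₀ y)
    exact InnerProductSpace.toDual_symm_apply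
  -- T is linear
  let T : W →ₗ[ℂ] W :=
    { toFun := Tfun
      map_add' := by
        intro x x'
        apply hext
        intro y
        rw [hTdef, hadd₂, hTdef, hTdef, Radd, hadd₁]
      map_smul' := by
        intro a x
        apply hext
        intro y
        show h y (Tfun (a • x)) = h y (a • Tfun x)
        rw [hTdef, hsmul₂, hTdef, Rsmul, hsmul₁] }
  have hTapp : ∀ x y : W, h y (T x) = h (R₀ x) (R₀ y) := hTdef
  -- T is symmetric
  have hTsymm : T.IsSymmetric := by
    intro x y
    show h y (T x) = h (T y) x
    rw [hTapp, hherm x (T y), hTapp, ← hherm]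
  -- key relation : T ∘ R₀ ∘ T = R₀
  have hTRT : ∀ x : W, T (R₀ (T x)) = R₀ x := by
    intro x
    apply hext
    intro y
    rw [hTapp, Rinvol, hherm (R₀ y) (T x), hTapp, Rinvol, ← hherm]
  -- T commutes with the action
  have hρρ : ∀ (s : G) (x : W), ρ s (ρ s⁻¹ x) = x := by
    intro s x
    have : ρ s * ρ s⁻¹ = 1 := by rw [← map_mul, mul_inv_cancel, map_one]
    calc ρ s (ρ s⁻¹ x) = (ρ s * ρ s⁻¹) x := rfl
    _ = x := by rw [this]; rfl
  have hTequiv : ∀ (s : G) (x : W), T (ρ s x) = ρ s (T x) := by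
    intro s x
    apply hext
    intro y
    rw [hTapp, Requiv]
    conv_rhs => rw [← hρρ s y]
    rw [hinv, hTapp, Requiv, ← hinv s (R₀ x) (ρ s⁻¹ (R₀ y)), hρρ]
  -- spectral decomposition of T
  have hn : Module.finrank ℂ W = Module.finrank ℂ W := rfl
  let b := hTsymm.eigenvectorBasis hn
  let μ := hTsymm.eigenvalues hn
  have hb : ∀ i, T (b i) = (μ i : ℂ) • b i := fun i => hTsymm.apply_eigenvectorBasis hn i
  have hbo : ∀ i j, (inner ℂ (b i) (b j) : ℂ) = if i = j then 1 else 0 :=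
    orthonormal_iff_ite.mp b.orthonormal
  have hbne : ∀ i, (b i : W) ≠ 0 := by
    intro i
    have := b.toBasis.ne_zero i
    simpa using this
  have hμpos : ∀ i, 0 < μ i := by
    intro i
    have h1 : 0 < (h (b i) (b i)).re := hposdef _ (hbne i)
    have h2 : 0 < (h (R₀ (b i)) (R₀ (b i))).re :=
      hposdef _ (fun H => hbne i (R0inj _ H))
    have h3 : h (b i) (T (b i)) = h (R₀ (b i)) (R₀ (b i)) := hTapp _ _
    rw [hb, hsmul₂] at h3
    rw [Complex.conj_ofReal] at h3
    have h4 : μ i * (h (b i) (b i)).re = (h (R₀ (b i)) (R₀ (b i))).re := by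
      rw [← h3, Complex.re_ofReal_mul]
    nlinarith
  -- the square root S of T
  let S : W →ₗ[ℂ] W := b.toBasis.constr ℂ fun i => (Real.sqrt (μ i) : ℂ) • b i
  have hSb : ∀ i, S (b i) = (Real.sqrt (μ i) : ℂ) • b i := by
    intro i
    have := b.toBasis.constr_basis ℂ (fun i => (Real.sqrt (μ i) : ℂ) • b i) i
    simp only [OrthonormalBasis.coe_toBasis] at this
    exact this
  -- S acts as sqrt on eigenvectors
  have hSeig : ∀ (a : ℝ), ∀ x : W, T x = (a : ℂ) • x → S x = (Real.sqrt a : ℂ) • x := by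
    intro a x hx
    have hrepr := b.toBasis.sum_repr x
    set r : _ → ℂ := fun i => b.toBasis.repr x i with hr
    have hTx : T x = ∑ i, (r i * (μ i : ℂ)) • b.toBasis i := by
      conv_lhs => rw [← hrepr]
      rw [map_sum]
      refine Finset.sum_congr rfl fun i _ => ?_
      rw [map_smul]
      rw [show T (b.toBasis i) = ((μ i : ℂ)) • b.toBasis i from by
        simpa using hb i]
      rw [smul_smul]
    have hax : (a : ℂ) • x = ∑ i, ((a : ℂ) * r i) • b.toBasis i := by
      conv_lhs => rw [← hrepr]
      rw [Finset.smul_sum]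
      refine Finset.sum_congr rfl fun i _ => ?_
      rw [smul_smul]
    have hco : ∀ i, r i * (μ i : ℂ) = (a : ℂ) * r i := by
      intro i
      have e1 := b.toBasis.repr_sum_self (fun i => r i * (μ i : ℂ))
      have e2 := b.toBasis.repr_sum_self (fun i => (a : ℂ) * r i)
      calc r i * (μ i : ℂ)
          = b.toBasis.repr (∑ j, (r j * (μ j : ℂ)) • b.toBasis j) i := by rw [e1]
        _ = b.toBasis.repr ((a : ℂ) • x) i := by rw [← hTx, hx]
        _ = b.toBasis.repr (∑ j, ((a : ℂ) * r j) • b.toBasis j) i := by rw [← hax]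
        _ = (a : ℂ) * r i := by rw [e2]
    have hSx : S x = ∑ i, (r i * (Real.sqrt (μ i) : ℂ)) • b.toBasis i := by
      conv_lhs => rw [← hrepr]
      rw [map_sum]
      refine Finset.sum_congr rfl fun i _ => ?_
      rw [map_smul]
      rw [show S (b.toBasis i) = ((Real.sqrt (μ i) : ℂ)) • b.toBasis i from by
        simpa using hSb i]
      rw [smul_smul]
    have hax' : (Real.sqrt a : ℂ) • x = ∑ i, ((Real.sqrt a : ℂ) * r i) • b.toBasis i := by
      conv_lhs => rw [← hrepr]
      rw [Finset.smul_sum]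
      refine Finset.sum_congr rfl fun i _ => ?_
      rw [smul_smul]
    rw [hSx, hax']
    refine Finset.sum_congr rfl fun i _ => ?_
    by_cases hri : r i = 0
    · simp [hri]
    · have hμa : (μ i : ℂ) = (a : ℂ) := by
        have hc := hco i
        rw [mul_comm (r i) ((μ i : ℂ))] at hc
        exact mul_right_cancel₀ hri hc
      have : μ i = a := by exact_mod_cast hμa
      rw [this, mul_comm]
  -- S commutes with the action
  have hSρ : ∀ (s : G) (x : W), S (ρ s x) = ρ s (S x) := by
    intro s x
    have hc : S ∘ₗ (ρ s) = (ρ s) ∘ₗ S := by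
      apply b.toBasis.ext
      intro i
      simp only [LinearMap.comp_apply, OrthonormalBasis.coe_toBasis]
      have hT' : T (ρ s (b i)) = ((μ i : ℝ) : ℂ) • ρ s (b i) := by
        rw [hTequiv, hb, map_smul]
      rw [hSeig (μ i) _ hT', hSb, map_smul]
    exact LinearMap.congr_fun hc x
  -- R₀ maps μ-eigenvectors to μ⁻¹-eigenvectors
  have hR0T : ∀ i, T (R₀ (b i)) = (((μ i)⁻¹ : ℝ) : ℂ) • R₀ (b i) := by
    intro i
    have hμne : (μ i : ℂ) ≠ 0 := by
      exact_mod_cast ne_of_gt (hμpos i)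
    have h1 : R₀ (T (b i)) = (μ i : ℂ) • R₀ (b i) := by
      rw [hb, Rsmul, Complex.conj_ofReal]
    have h2 : T (R₀ (T (b i))) = R₀ (b i) := hTRT (b i)
    rw [h1, map_smul] at h2
    rw [Complex.ofReal_inv]
    conv_rhs => rw [← h2]
    rw [smul_smul, inv_mul_cancel₀ hμne, one_smul]
  have hSR0b : ∀ i, S (R₀ (b i)) = ((Real.sqrt ((μ i)⁻¹)) : ℂ) • R₀ (b i) :=
    fun i => hSeig _ _ (hR0T i)
  -- S ∘ R₀ ∘ S = R₀
  have hSRS : ∀ x : W, S (R₀ (S x)) = R₀ x := by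
    have hc : (S.comp (R₀ₗ.comp S) : W →ₛₗ[starRingEnd ℂ] W) = R₀ₗ := by
      apply b.toBasis.ext
      intro i
      simp only [LinearMap.comp_apply, OrthonormalBasis.coe_toBasis]
      show S (R₀ (S (b i))) = R₀ (b i)
      have hone : Real.sqrt (μ i) * Real.sqrt ((μ i)⁻¹) = 1 := by
        rw [Real.sqrt_inv, mul_inv_cancel₀ (Real.sqrt_ne_zero'.mpr (hμpos i))]
      rw [hSb, Rsmul, Complex.conj_ofReal, map_smul, hSR0b, smul_smul,
        ← Complex.ofReal_mul, hone]
      simp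
    intro x
    exact LinearMap.congr_fun hc x
  -- ⟨S u, S v⟩ = ⟨T u, v⟩
  have hSS : ∀ u v : W, h (S u) (S v) = h (T u) v := by
    have hB : (((innerₛₗ ℂ).comp S).compl₂ S : W →ₗ⋆[ℂ] W →ₗ[ℂ] ℂ)
        = ((innerₛₗ ℂ).compl₂ T : W →ₗ⋆[ℂ] W →ₗ[ℂ] ℂ) := by
      apply b.toBasis.ext
      intro i
      apply b.toBasis.ext
      intro j
      simp only [LinearMap.compl₂_apply, LinearMap.comp_apply,
        OrthonormalBasis.coe_toBasis, innerₛₗ_apply_apply]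
      rw [hSb, hSb, hb, inner_smul_left, inner_smul_right, inner_smul_right,
        Complex.conj_ofReal, hbo i j]
      by_cases hij : i = j
      · subst hij
        simp [← Complex.ofReal_mul, Real.mul_self_sqrt (le_of_lt (hμpos i))]
      · simp [hij]
    intro u v
    have := LinearMap.congr_fun (LinearMap.congr_fun hB v) u
    simp only [LinearMap.compl₂_apply, LinearMap.comp_apply, innerₛₗ_apply_apply] at this
    exact this
  -- assemble
  refine ⟨fun x => S (R₀ x), ⟨?_, ?_, ?_⟩, ?_, ?_⟩
  · intro x y
    show S (R₀ (x + y)) = S (R₀ x) + S (R₀ y)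
    rw [Radd, map_add]
  · intro a x
    show S (R₀ (a • x)) = starRingEnd ℂ a • S (R₀ x)
    rw [Rsmul, map_smul]
  · intro x
    show S (R₀ (S (R₀ x))) = x
    rw [hSRS (R₀ x), Rinvol]
  · intro s x
    show S (R₀ (ρ s x)) = ρ s (S (R₀ x))
    rw [Requiv, hSρ]
  · intro x y
    show h (S (R₀ x)) (S (R₀ y)) = h y x
    rw [hSS, hherm (R₀ y) (T (R₀ x)), hTapp, Rinvol, Rinvol, ← hherm]
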